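/- Let q ≥ 3 be odd and let G = Z_2 * Z_q = ⟨S⟩ * ⟨R⟩ be the Hecke group. Then the power subgroup G² generated by all squares of elements of G is a normal subgroup of index 2, and G² is generated by the two elements R = ST^{-1} and A = T^{-1}S (each of order q); in particular G² ≅ Z_q * Z_q. -/

import Mathlib

/-- The Hecke group `G_q`, abstractly: the free product `Z_2 * Z_q`. -/
def Hecke (q : ℕ) : Type := Monoid.Coprod (Multiplicative (ZMod 2)) (Multiplicative (ZMod q))

instance (q : ℕ) : Group (Hecke q) :=
  inferInstanceAs (Group (Monoid.Coprod (Multiplicative (ZMod 2)) (Multiplicative (ZMod q))))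

/-- The order-2 generator `S`. -/
def HS (q : ℕ) : Hecke q := Monoid.Coprod.inl (Multiplicative.ofAdd (1 : ZMod 2))

/-- The order-`q` generator `R = S T⁻¹`.  Note `T = R⁻¹ S`, so `A = T⁻¹ S = S R S`. -/
def HR (q : ℕ) : Hecke q := Monoid.Coprod.inr (Multiplicative.ofAdd (1 : ZMod q))

namespace HeckeAux

open Monoid Multiplicative

def homOfSq {G : Type*} [Monoid G] (g : G) (h : g * g = 1) : Multiplicative (ZMod 2) →* G where
  toFun z := g ^ (Multiplicative.toAdd z).val
  map_one' := by simp
  map_mul' a b := by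
    have h2 : g ^ 2 = 1 := by rw [pow_two, h]
    have key : ∀ n : ℕ, g ^ (n % 2) = g ^ n := by
      intro n
      conv_rhs => rw [← Nat.div_add_mod n 2]
      rw [pow_add, pow_mul, h2, one_pow, one_mul]
    show g ^ (Multiplicative.toAdd (a * b)).val = _
    rw [toAdd_mul, ZMod.val_add, key, pow_add]

@[simp] lemma homOfSq_gen {G : Type*} [Monoid G] (g : G) (h : g * g = 1) :
    homOfSq g h (Multiplicative.ofAdd 1) = g := by
  show g ^ (1 : ZMod 2).val = g
  norm_num [ZMod.val_one]

variable (q : ℕ)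

abbrev Mq := Multiplicative (ZMod q)
abbrev Z2 := Multiplicative (ZMod 2)
abbrev P := Monoid.Coprod (Mq q) (Mq q)

/-- `inl` of the Hecke group, as a hom into `Hecke q`. -/
def hInl : Z2 →* Hecke q := Monoid.Coprod.inl
/-- `inr` of the Hecke group, as a hom into `Hecke q`. -/
def hInr : Mq q →* Hecke q := Monoid.Coprod.inr

lemma hInl_gen : hInl q (ofAdd 1) = HS q := rfl
lemma hInr_gen : hInr q (ofAdd 1) = HR q := rfl

def σ : MulAut (P q) := MulEquiv.coprodComm (Mq q) (Mq q)

lemma σσ : σ q * σ q = 1 := by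
  apply MulEquiv.ext
  intro x
  exact DFunLike.congr_fun (Coprod.swap_comp_swap _ _) x

def φ : Z2 →* MulAut (P q) := homOfSq (σ q) (σσ q)

abbrev K := SemidirectProduct (P q) Z2 (φ q)

def Θ : Hecke q →* K q :=
  Coprod.lift SemidirectProduct.inr (SemidirectProduct.inl.comp Coprod.inl)

lemma hS2 : HS q * HS q = 1 := by
  rw [← hInl_gen, ← map_mul, show (ofAdd (1 : ZMod 2)) * ofAdd 1 = 1 by decide, map_one]

lemma hSinv : (HS q)⁻¹ = HS q := inv_eq_of_mul_eq_one_right (hS2 q)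

def ι : P q →* Hecke q :=
  Coprod.lift (hInr q) ((MulAut.conj (HS q)).toMonoidHom.comp (hInr q))

lemma ι_inl (x : Mq q) : ι q (Coprod.inl x) = hInr q x :=
  Coprod.lift_apply_inl _ _ _

lemma ι_inr (x : Mq q) : ι q (Coprod.inr x) = HS q * hInr q x * (HS q)⁻¹ :=
  Coprod.lift_apply_inr _ _ _

lemma conjconj (y : Hecke q) : HS q * (HS q * y * (HS q)⁻¹) * (HS q)⁻¹ = y := by
  rw [hSinv, show HS q * (HS q * y * HS q) * HS q
      = (HS q * HS q) * y * (HS q * HS q) by group, hS2, one_mul, mul_one]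

lemma φ_gen : (φ q) (ofAdd 1) = σ q := homOfSq_gen _ _

lemma σ_inl (x : Mq q) : σ q (Coprod.inl x) = Coprod.inr x := rfl
lemma σ_inr (x : Mq q) : σ q (Coprod.inr x) = Coprod.inl x := rfl

lemma compat : ∀ z : Z2, (ι q).comp ((φ q) z).toMonoidHom
    = (MulAut.conj (hInl q z)).toMonoidHom.comp (ι q) := by
  have hcases : ∀ z : Z2, z = 1 ∨ z = ofAdd 1 := by decide
  intro z
  rcases hcases z with rfl | rfl
  · ext x <;>
      simp [map_one, MulAut.one_apply, MulEquiv.coe_toMonoidHom, MonoidHom.comp_apply,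
        MulAut.conj_apply]
  · rw [φ_gen, hInl_gen]
    apply Coprod.hom_ext
    · apply MonoidHom.ext; intro x
      simp only [MonoidHom.comp_apply, MulEquiv.coe_toMonoidHom, σ_inl, ι_inl, ι_inr,
        MulAut.conj_apply]
    · apply MonoidHom.ext; intro x
      simp only [MonoidHom.comp_apply, MulEquiv.coe_toMonoidHom, σ_inr, ι_inl, ι_inr,
        MulAut.conj_apply, conjconj]

def Ξ : K q →* Hecke q := SemidirectProduct.lift (ι q) (hInl q) (compat q)

lemma Θ_hInl (z : Z2) : Θ q (hInl q z) = SemidirectProduct.inr z :=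
  Coprod.lift_apply_inl _ _ _

lemma Θ_hInr (x : Mq q) : Θ q (hInr q x)
    = SemidirectProduct.inl ((Coprod.inl : Mq q →* P q) x) :=
  Coprod.lift_apply_inr _ _ _

lemma Ξ_inl (p : P q) : Ξ q (SemidirectProduct.inl p) = ι q p :=
  SemidirectProduct.lift_inl _ _ _ _

lemma Ξ_inr (z : Z2) : Ξ q (SemidirectProduct.inr z) = hInl q z :=
  SemidirectProduct.lift_inr _ _ _ _

lemma ΞΘ (g : Hecke q) : Ξ q (Θ q g) = g := by
  have : (Ξ q).comp (Θ q) = MonoidHom.id _ := by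
    apply Coprod.hom_ext
    · show (Ξ q).comp ((Θ q).comp Coprod.inl) = _
      rw [show (Θ q).comp Coprod.inl = SemidirectProduct.inr from rfl,
        Ξ, SemidirectProduct.lift_comp_inr]
      rfl
    · show (Ξ q).comp ((Θ q).comp Coprod.inr) = _
      rw [show (Θ q).comp Coprod.inr = SemidirectProduct.inl.comp Coprod.inl from rfl,
        show (Ξ q).comp (SemidirectProduct.inl.comp Coprod.inl)
          = ((Ξ q).comp SemidirectProduct.inl).comp Coprod.inl from rfl,
        Ξ, SemidirectProduct.lift_comp_inl]
      rfl
  exact DFunLike.congr_fun this g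

lemma ΘΞinl : (Θ q).comp (ι q) = SemidirectProduct.inl := by
  apply Coprod.hom_ext
  · apply MonoidHom.ext; intro x
    simp only [MonoidHom.comp_apply, ι_inl, Θ_hInr]
  · apply MonoidHom.ext; intro x
    simp only [MonoidHom.comp_apply, ι_inr]
    rw [map_mul, map_mul, map_inv, ← hInl_gen, Θ_hInl, Θ_hInr, ← map_inv,
      ← SemidirectProduct.inl_aut, φ_gen]
    rfl

end HeckeAux
namespace HeckeAux

open Monoid Multiplicative

variable (q : ℕ)

def χ : Hecke q →* Z2 := Coprod.lift (MonoidHom.id _) 1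

lemma χ_inl (z : Z2) : χ q (hInl q z) = z := rfl

lemma χ_surj : Function.Surjective (χ q) := fun z => ⟨hInl q z, rfl⟩

lemma rightHom_Θ : (SemidirectProduct.rightHom).comp (Θ q) = χ q := by
  apply Coprod.hom_ext
  · show SemidirectProduct.rightHom.comp ((Θ q).comp Coprod.inl) = _
    rw [show (Θ q).comp Coprod.inl = SemidirectProduct.inr from rfl,
      SemidirectProduct.rightHom_comp_inr]
    rfl
  · show SemidirectProduct.rightHom.comp ((Θ q).comp Coprod.inr) = _
    rw [show (Θ q).comp Coprod.inr = SemidirectProduct.inl.comp Coprod.inl from rfl,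
      ← MonoidHom.comp_assoc, SemidirectProduct.rightHom_comp_inl, MonoidHom.one_comp]
    rfl

lemma hRq : HR q ^ q = 1 := by
  rw [← hInr_gen, ← map_pow, ← ofAdd_nsmul, Nat.smul_one_eq_cast, ZMod.natCast_self, ofAdd_zero,
    map_one]

lemma hInr_pow [NeZero q] (x : Mq q) : hInr q x = HR q ^ (Multiplicative.toAdd x).val := by
  rw [← hInr_gen, ← map_pow, ← ofAdd_nsmul, Nat.smul_one_eq_cast, ZMod.natCast_rightInverse _]
  rfl

lemma ker_le_range : (χ q).ker ≤ (ι q).range := by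
  intro g hg
  have h1 : SemidirectProduct.rightHom (Θ q g) = 1 := by
    have h := DFunLike.congr_fun (rightHom_Θ q) g
    rw [MonoidHom.comp_apply] at h
    rw [h]
    exact hg
  have h2 : Θ q g ∈ (SemidirectProduct.inl : P q →* K q).range := by
    rw [SemidirectProduct.range_inl_eq_ker_rightHom]
    exact h1
  obtain ⟨p, hp⟩ := h2
  exact ⟨p, by rw [← Ξ_inl, hp, ΞΘ]⟩

lemma ι_injective : Function.Injective (ι q) := by
  intro a b hab
  apply SemidirectProduct.inl_injective (φ := φ q)
  have ha := DFunLike.congr_fun (ΘΞinl q) a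
  have hb := DFunLike.congr_fun (ΘΞinl q) b
  rw [MonoidHom.comp_apply] at ha hb
  rw [← ha, ← hb, hab]

end HeckeAux
open HeckeAux Monoid Multiplicative in
/-- Proposition 5.5 (odd case): for odd `q ≥ 3`, the power subgroup `G²` of `G_q`
generated by all squares is normal of index 2, is generated by `R = ST⁻¹` and
`A = T⁻¹S = SRS` (each of order `q`), and is isomorphic to `Z_q * Z_q`. -/
theorem stmt_6 (q : ℕ) (hq : 3 ≤ q) (hodd : Odd q) :
    (Subgroup.closure {x : Hecke q | ∃ y, x = y ^ 2}).Normal ∧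
    (Subgroup.closure {x : Hecke q | ∃ y, x = y ^ 2}).index = 2 ∧
    Subgroup.closure {x : Hecke q | ∃ y, x = y ^ 2}
      = Subgroup.closure {HR q, HS q * HR q * HS q} ∧
    orderOf (HR q) = q ∧ orderOf (HS q * HR q * HS q) = q ∧
    Nonempty ((Subgroup.closure {x : Hecke q | ∃ y, x = y ^ 2}) ≃*
      Monoid.Coprod (Multiplicative (ZMod q)) (Multiplicative (ZMod q))) := by
  haveI : NeZero q := ⟨by omega⟩
  set SQ := Subgroup.closure {x : Hecke q | ∃ y, x = y ^ 2} with hSQ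
  set C := Subgroup.closure {HR q, HS q * HR q * HS q} with hC
  -- squares land in the kernel of χ
  have h1 : SQ ≤ (χ q).ker := by
    rw [hSQ, Subgroup.closure_le]
    rintro x ⟨y, rfl⟩
    have hz : ∀ z : Z2, z ^ 2 = 1 := by decide
    show y ^ 2 ∈ (χ q).ker
    rw [MonoidHom.mem_ker, map_pow, hz]
  -- kernel of χ is contained in the range of ι
  have h3 : (χ q).ker ≤ (ι q).range := ker_le_range q
  -- range of ι is contained in C
  have hHRC : HR q ∈ C := Subgroup.subset_closure (Set.mem_insert _ _)
  have hSRSC : HS q * HR q * HS q ∈ C :=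
    Subgroup.subset_closure (Set.mem_insert_iff.2 (Or.inr rfl))
  have h4 : (ι q).range ≤ C := by
    rintro g ⟨p, rfl⟩
    induction p using Coprod.induction_on with
    | inl x =>
      rw [ι_inl, hInr_pow]
      exact pow_mem hHRC _
    | inr x =>
      rw [ι_inr, hInr_pow]
      have hcp : HS q * HR q ^ (Multiplicative.toAdd x).val * (HS q)⁻¹
          = (HS q * HR q * (HS q)⁻¹) ^ (Multiplicative.toAdd x).val := by
        set_option linter.unnecessarySimpa false in
        simpa [MulAut.conj_apply] using
          map_pow (MulAut.conj (HS q)).toMonoidHom (HR q) (Multiplicative.toAdd x).val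
      rw [hcp, hSinv]
      exact pow_mem hSRSC _
    | mul a b iha ihb =>
      rw [map_mul]
      exact mul_mem iha ihb
  -- C consists of squares
  obtain ⟨m, hm⟩ := hodd
  set k := (q + 1) / 2 with hkdef
  have hk : k + k = q + 1 := by omega
  have h2 : C ≤ SQ := by
    rw [hC, Subgroup.closure_le]
    rintro x (rfl | rfl)
    · apply Subgroup.subset_closure
      refine ⟨HR q ^ k, ?_⟩
      rw [← pow_mul, mul_comm, two_mul, hk, pow_succ, hRq, one_mul]
    · apply Subgroup.subset_closure
      refine ⟨HS q * HR q ^ k * HS q, ?_⟩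
      rw [pow_two, show (HS q * HR q ^ k * HS q) * (HS q * HR q ^ k * HS q)
          = HS q * (HR q ^ k * (HS q * HS q) * HR q ^ k) * HS q by group,
        hS2, mul_one, ← pow_add, hk, pow_succ, hRq, one_mul]
  -- the three subgroups coincide
  have E1 : SQ = (χ q).ker := le_antisymm h1 (h3.trans (h4.trans h2))
  have E2 : SQ = C := le_antisymm (h1.trans (h3.trans h4)) h2
  have E3 : SQ = (ι q).range := le_antisymm (h1.trans h3) (h4.trans h2)
  have hordR : orderOf (HR q) = q := by
    rw [← hInr_gen, orderOf_injective (hInr q) (fun a b h => Coprod.inr_injective h),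
      orderOf_ofAdd_eq_addOrderOf, ZMod.addOrderOf_one]
  refine ⟨?_, ?_, E2, hordR, ?_, ?_⟩
  · rw [E1]; exact MonoidHom.normal_ker (χ q)
  · rw [E1, Subgroup.index_ker, MonoidHom.range_eq_top_of_surjective _ (χ_surj q),
      Subgroup.card_top, Nat.card_congr (Multiplicative.toAdd : Multiplicative (ZMod 2) ≃ ZMod 2), Nat.card_zmod]
  · have hconj : (MulAut.conj (HS q)).toMonoidHom (HR q) = HS q * HR q * HS q := by
      show HS q * HR q * (HS q)⁻¹ = HS q * HR q * HS q
      rw [hSinv]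
    rw [← hconj,
      orderOf_injective (MulAut.conj (HS q)).toMonoidHom (MulAut.conj (HS q)).injective,
      hordR]
  · exact ⟨(MulEquiv.subgroupCongr E3).trans (MonoidHom.ofInjective (ι_injective q)).symm⟩
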